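/- With the fixed bandwidth kernel K(x) = I, the conditional mean estimator satisfies the identity m(x;ε) = x + ε ∇_x log Π(x;ε) for all x ∈ ℝ^d, where Π(x;ε) := (Σ_{i=1}^M v_i t_i(x))², i.e. the drift (m(x;ε) − x)/ε is the gradient of the logarithm of the squared weighted kernel sum. -/

import Mathlib

/-- Lemma 3 of the paper: with fixed bandwidth kernel `K = I`, the conditional mean
estimator satisfies `m(x;ε) = x + ε ∇ log Π(x;ε)` where `Π(x;ε) = (∑ i, v_i t_i(x))²`. -/
theorem conditional_mean_eq_gradient_log
    (d M : ℕ) (hM : 0 < M) (ε : ℝ) (hε : 0 < ε)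
    (X : Fin M → EuclideanSpace ℝ (Fin d)) (v : Fin M → ℝ) (hv : ∀ i, 0 < v i)
    (x : EuclideanSpace ℝ (Fin d)) :
    (∑ i, (v i * Real.exp (-‖x - X i‖ ^ 2 / (4 * ε)) /
        ∑ j, v j * Real.exp (-‖x - X j‖ ^ 2 / (4 * ε))) • X i)
      = x + ε • gradient
          (fun y => Real.log ((∑ i, v i * Real.exp (-‖y - X i‖ ^ 2 / (4 * ε))) ^ 2)) x := by
  have : Nonempty (Fin M) := ⟨⟨0, hM⟩⟩
  set t : Fin M → ℝ := fun i => Real.exp (-‖x - X i‖ ^ 2 / (4 * ε)) with ht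
  set S : EuclideanSpace ℝ (Fin d) → ℝ :=
    fun y => ∑ i, v i * Real.exp (-‖y - X i‖ ^ 2 / (4 * ε)) with hSdef
  have hSx : 0 < S x := by
    apply Finset.sum_pos
    · intro i _; exact mul_pos (hv i) (Real.exp_pos _)
    · exact Finset.univ_nonempty
  -- fderiv of S
  have hS : HasFDerivAt S
      (∑ i, (v i * t i * (-(4*ε)⁻¹)) • (2 • (innerSL ℝ (x - X i)))) x := by
    apply HasFDerivAt.fun_sum
    intro i _
    have h1 : HasFDerivAt (fun y : EuclideanSpace ℝ (Fin d) => ‖y - X i‖ ^ 2)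
        (2 • (innerSL ℝ (x - X i))) x := by
      simpa using ((hasFDerivAt_id x).sub_const (X i)).norm_sq
    have h2 : HasFDerivAt (fun y : EuclideanSpace ℝ (Fin d) => -‖y - X i‖ ^ 2 / (4 * ε))
        ((-(4*ε)⁻¹) • (2 • (innerSL ℝ (x - X i)))) x := by
      have := h1.const_smul (-(4*ε)⁻¹)
      exact this.congr_of_eventuallyEq (Filter.Eventually.of_forall fun y => by
        simp only [Pi.smul_apply, smul_eq_mul]
        ring)
    have h3 := (Real.hasDerivAt_exp (-‖x - X i‖ ^ 2 / (4 * ε))).comp_hasFDerivAt x h2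
    have h4 := h3.const_mul (v i)
    exact h4.congr_fderiv (by rw [smul_smul, smul_smul, mul_assoc])
  -- log of square
  have hlog : HasDerivAt (fun s : ℝ => Real.log (s ^ 2)) ((2 * S x ^ 1) / (S x ^ 2)) (S x) :=
    (hasDerivAt_pow 2 (S x)).log (by positivity)
  have hF := hlog.comp_hasFDerivAt x hS
  -- gradient
  set G : EuclideanSpace ℝ (Fin d) :=
    ∑ i, (-(v i * t i) / (ε * S x)) • (x - X i) with hG
  have hgrad : HasGradientAt (fun y => Real.log (S y ^ 2)) G x := by
    rw [hasGradientAt_iff_hasFDerivAt]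
    refine hF.congr_fderiv (Eq.symm ?_)
    ext y
    simp [G, inner_sum, inner_smul_left, real_inner_smul_left, inner_sub_left, Finset.mul_sum]
    rw [← Finset.sum_neg_distrib]
    apply Finset.sum_congr rfl
    intro i _
    field_simp
    ring
  have hgx : gradient (fun y => Real.log (S y ^ 2)) x = G := hgrad.gradient
  rw [show (fun y => Real.log ((∑ i, v i * Real.exp (-‖y - X i‖ ^ 2 / (4 * ε))) ^ 2))
      = fun y => Real.log (S y ^ 2) from rfl, hgx]
  -- final algebra
  have hsum : ∑ i, v i * t i / S x = 1 := by
    rw [← Finset.sum_div]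
    field_simp [hSdef]
    rfl
  rw [hG, Finset.smul_sum]
  have : ∀ i : Fin M, ε • ((-(v i * t i) / (ε * S x)) • (x - X i))
      = (v i * t i / S x) • X i - (v i * t i / S x) • x := by
    intro i
    rw [smul_smul, smul_sub]
    have : ε * (-(v i * t i) / (ε * S x)) = -(v i * t i / S x) := by
      field_simp
    rw [this]
    module
  rw [Finset.sum_congr rfl (fun i _ => this i), Finset.sum_sub_distrib, ← Finset.sum_smul, hsum]
  module
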